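/- The Balanced LIKE mechanism is envy-free ex-ante: with 0/1 utilities and all agents bidding truthfully, for every pair of agents i and j, agent i's expected utility for agent j's random allocation under the Balanced LIKE process is at most agent i's expected utility for her own random allocation, i.e., E[u_i(A_j)] ≤ E[u_i(A_i)]. -/

import Mathlib

open Finset

attribute [local instance] Classical.propDecidable

noncomputable section

/-- Number of items agent `j` has received in rounds strictly before round `k`
under the outcome `a` (where `a k = some j` means item `k` went to agent `j`). -/
def countBefore {n m : ℕ} (a : Fin m → Option (Fin n)) (j : Fin n) (k : Fin m) : ℕ :=
  (Finset.univ.filter fun k' : Fin m => k' < k ∧ a k' = some j).card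

/-- The set of agents feasible for item `k` under the Weighted Balanced LIKE mechanism:
those bidders minimizing (count so far)/weight.  (With all weights equal to 1 this is the
Balanced LIKE mechanism.) -/
def minSet {n m : ℕ} (w : Fin n → ℝ) (B : Fin m → Finset (Fin n))
    (a : Fin m → Option (Fin n)) (k : Fin m) : Finset (Fin n) :=
  (B k).filter fun j => ∀ l ∈ B k,
    (countBefore a j k : ℝ) / w j ≤ (countBefore a l k : ℝ) / w l

/-- Conditional probability of the allocation decision `a k` made at round `k`,
given the history encoded in `a`. -/
def stepProb {n m : ℕ} (w : Fin n → ℝ) (B : Fin m → Finset (Fin n))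
    (a : Fin m → Option (Fin n)) (k : Fin m) : ℝ :=
  if B k = ∅ then (if a k = none then 1 else 0)
  else
    match a k with
    | none => 0
    | some j => if j ∈ minSet w B a k then 1 / (minSet w B a k).card else 0

/-- Probability of the full outcome `a` under the Weighted Balanced LIKE process. -/
def outcomeProb {n m : ℕ} (w : Fin n → ℝ) (B : Fin m → Finset (Fin n))
    (a : Fin m → Option (Fin n)) : ℝ :=
  ∏ k, stepProb w B a k

/-- Realized utility, w.r.t. the utility function `u`, of agent `j`'s bundle in outcome `a`. -/
def realizedUtil {n m : ℕ} (u : Fin m → ℝ) (a : Fin m → Option (Fin n)) (j : Fin n) : ℝ :=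
  ∑ k, if a k = some j then u k else 0

/-- Expected utility, w.r.t. the utility function `u`, of agent `j`'s (random) bundle
under the Weighted Balanced LIKE process. -/
def expUtil {n m : ℕ} (w : Fin n → ℝ) (B : Fin m → Finset (Fin n))
    (u : Fin m → ℝ) (j : Fin n) : ℝ :=
  ∑ a : Fin m → Option (Fin n), outcomeProb w B a * realizedUtil u a j

/-- Build round-wise bid sets from per-agent bid sets `s` (agent `j` bids on the items
in `s j`). -/
def mkBids {n m : ℕ} (s : Fin n → Finset (Fin m)) : Fin m → Finset (Fin n) :=
  fun k => Finset.univ.filter fun j => k ∈ s j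



variable {n : ℕ}
def msetC (c : Fin n → ℕ) (B : Finset (Fin n)) : Finset (Fin n) :=
  B.filter fun x => ∀ y ∈ B, c x ≤ c y
lemma mem_msetC {c : Fin n → ℕ} {B : Finset (Fin n)} {x : Fin n} :
    x ∈ msetC c B ↔ x ∈ B ∧ ∀ y ∈ B, c x ≤ c y := by simp [msetC]
lemma msetC_subset {c : Fin n → ℕ} {B : Finset (Fin n)} : msetC c B ⊆ B := Finset.filter_subset _ _
lemma msetC_nonempty {c : Fin n → ℕ} {B : Finset (Fin n)} (hB : B.Nonempty) :
    (msetC c B).Nonempty := by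
  obtain ⟨b, hb, hmin⟩ := Finset.exists_min_image B c hB
  exact ⟨b, mem_msetC.mpr ⟨hb, hmin⟩⟩
def bump (c : Fin n → ℕ) (l : Fin n) : Fin n → ℕ := fun x => c x + if l = x then 1 else 0
@[simp] lemma bump_same (c : Fin n → ℕ) (l : Fin n) : bump c l l = c l + 1 := by simp [bump]
lemma bump_other {l x : Fin n} (c : Fin n → ℕ) (h : l ≠ x) : bump c l x = c x := by simp [bump, h]
def dlt (i j l : Fin n) (B : Finset (Fin n)) : ℝ :=
  if i ∈ B then (if l = i then 1 else 0) - (if l = j then 1 else 0) else 0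
def EV (i j : Fin n) : (Fin n → ℕ) → List (Finset (Fin n)) → ℝ
  | _, [] => 0
  | c, B :: Bs =>
    if B = ∅ then EV i j c Bs
    else ∑ l ∈ msetC c B, (1 / ((msetC c B).card : ℝ)) * (dlt i j l B + EV i j (bump c l) Bs)
lemma EV_cons_ne {i j : Fin n} {c : Fin n → ℕ} {B : Finset (Fin n)} {Bs} (hB : B ≠ ∅) :
    EV i j c (B :: Bs)
      = ∑ l ∈ msetC c B, (1 / ((msetC c B).card : ℝ)) * (dlt i j l B + EV i j (bump c l) Bs) := by
  simp [EV, hB]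
lemma EV_lower {i j : Fin n} {c : Fin n → ℕ} {B : Finset (Fin n)} {Bs} (hB : B ≠ ∅) {r : ℝ}
    (h : ∀ l ∈ msetC c B, r ≤ dlt i j l B + EV i j (bump c l) Bs) :
    r ≤ EV i j c (B :: Bs) := by
  rw [EV_cons_ne hB]
  have hne := msetC_nonempty (Finset.nonempty_iff_ne_empty.mpr hB) (c := c)
  have hcard : (0:ℝ) < ((msetC c B).card : ℝ) := by exact_mod_cast Finset.card_pos.mpr hne
  calc r = ∑ _l ∈ msetC c B, (1 / ((msetC c B).card : ℝ)) * r := by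
        rw [Finset.sum_const, nsmul_eq_mul]; field_simp
    _ ≤ _ := Finset.sum_le_sum (fun l hl =>
        mul_le_mul_of_nonneg_left (h l hl) (by positivity))
lemma EV_pair {i j : Fin n} {c c' : Fin n → ℕ} {B : Finset (Fin n)} {Bs} (hB : B ≠ ∅)
    (hM : msetC c B = msetC c' B)
    (h : ∀ l ∈ msetC c B,
      0 ≤ (dlt i j l B + EV i j (bump c l) Bs) + (dlt i j l B + EV i j (bump c' l) Bs)) :
    0 ≤ EV i j c (B :: Bs) + EV i j c' (B :: Bs) := by
  rw [EV_cons_ne hB, EV_cons_ne hB, ← hM, ← Finset.sum_add_distrib]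
  apply Finset.sum_nonneg; intro l hl
  rw [← mul_add]
  exact mul_nonneg (by positivity) (h l hl)

theorem EV_invariant (i j : Fin n) (hij : i ≠ j) (Bs : List (Finset (Fin n))) :
    (∀ c, -((c i - c j : ℕ) : ℝ) ≤ EV i j c Bs) ∧
    (∀ c c' : Fin n → ℕ, c i = c j + 1 → c' i = c j → c' j = c i →
      (∀ x, x ≠ i → x ≠ j → c' x = c x) → 0 ≤ EV i j c Bs + EV i j c' Bs) := by
  induction Bs with
  | nil =>
      constructor
      · intro c; simp [EV]
      · intro c c' _ _ _ _; simp [EV]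
  | cons B Bs IH =>
      obtain ⟨IHS, IHP⟩ := IH
      by_cases hB : B = ∅
      · constructor
        · intro c; simpa [EV, hB] using IHS c
        · intro c c' h1 h2 h3 h4; simpa [EV, hB] using IHP c c' h1 h2 h3 h4
      · have hBne : B.Nonempty := Finset.nonempty_iff_ne_empty.mpr hB
        have dlt0 : ∀ l : Fin n, l ≠ i → l ≠ j → dlt i j l B = 0 := by
          intro l hli hlj; simp [dlt, hli, hlj]
        -- the (S) statement at level B :: Bs
        have S : ∀ c : Fin n → ℕ, -((c i - c j : ℕ) : ℝ) ≤ EV i j c (B :: Bs) := by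
          intro c
          by_cases hboth : i ∈ msetC c B ∧ j ∈ msetC c B
          · obtain ⟨hiM, hjM⟩ := hboth
            have hiB := (mem_msetC.mp hiM).1
            have hcij : c i = c j :=
              le_antisymm ((mem_msetC.mp hiM).2 j (mem_msetC.mp hjM).1)
                ((mem_msetC.mp hjM).2 i hiB)
            have hzero : (c i - c j : ℕ) = 0 := by omega
            rw [hzero]
            simp only [Nat.cast_zero, neg_zero]
            rw [EV_cons_ne hB]
            have hjM2 : j ∈ (msetC c B).erase i := Finset.mem_erase.mpr ⟨Ne.symm hij, hjM⟩
            rw [← Finset.add_sum_erase _ _ hiM, ← Finset.add_sum_erase _ _ hjM2]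
            have hdi : dlt i j i B = 1 := by simp [dlt, hiB, hij]
            have hdj : dlt i j j B = -1 := by simp [dlt, hiB, Ne.symm hij]
            have hpair : 0 ≤ EV i j (bump c i) Bs + EV i j (bump c j) Bs := by
              apply IHP
              · rw [bump_same, bump_other c hij]; omega
              · rw [bump_other c (Ne.symm hij), bump_other c hij]; omega
              · rw [bump_same, bump_same]; omega
              · intro x hxi hxj
                rw [bump_other c (fun h => hxj h.symm), bump_other c (fun h => hxi h.symm)]
            have hrest : 0 ≤ ∑ l ∈ ((msetC c B).erase i).erase j,
                (1 / ((msetC c B).card : ℝ)) * (dlt i j l B + EV i j (bump c l) Bs) := by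
              apply Finset.sum_nonneg; intro l hl
              have hlj : l ≠ j := (Finset.mem_erase.mp hl).1
              have hli : l ≠ i := (Finset.mem_erase.mp (Finset.mem_erase.mp hl).2).1
              apply mul_nonneg (by positivity)
              rw [dlt0 l hli hlj, zero_add]
              have hE := IHS (bump c l)
              rw [bump_other c hli, bump_other c hlj] at hE
              rwa [hzero, Nat.cast_zero, neg_zero] at hE
            rw [hdi, hdj]
            have hcoef : (0:ℝ) ≤ 1 / ((msetC c B).card : ℝ) := by positivity
            nlinarith [mul_nonneg hcoef hpair]
          · apply EV_lower hB
            intro l hl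
            have hlB : l ∈ B := msetC_subset hl
            by_cases hli : l = i
            · rw [hli]
              have hiB : i ∈ B := hli ▸ hlB
              have hdl : dlt i j i B = 1 := by simp [dlt, hiB, hij]
              have hE := IHS (bump c i)
              rw [bump_same, bump_other c hij] at hE
              have hcast : ((c i + 1 - c j : ℕ) : ℝ) ≤ ((c i - c j : ℕ) : ℝ) + 1 := by
                calc ((c i + 1 - c j : ℕ) : ℝ) ≤ (((c i - c j) + 1 : ℕ) : ℝ) :=
                      Nat.cast_le.mpr (by omega)
                  _ = ((c i - c j : ℕ) : ℝ) + 1 := by push_cast; ring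
              rw [hdl]; linarith
            · by_cases hlj : l = j
              · rw [hlj]
                have hjM : j ∈ msetC c B := hlj ▸ hl
                have hjle := (mem_msetC.mp hjM).2
                by_cases hiB : i ∈ B
                · have hlt : c j < c i := by
                    rcases Nat.lt_or_ge (c j) (c i) with h | h
                    · exact h
                    · exfalso
                      apply hboth
                      refine ⟨mem_msetC.mpr ⟨hiB, fun y hy => ?_⟩, hjM⟩
                      exact le_trans h (hjle y hy)
                  have hdl : dlt i j j B = -1 := by simp [dlt, hiB, Ne.symm hij]
                  have hE := IHS (bump c j)
                  rw [bump_other c (Ne.symm hij), bump_same] at hE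
                  have hcast : ((c i - (c j + 1) : ℕ) : ℝ) + 1 = ((c i - c j : ℕ) : ℝ) := by
                    have h : c i - (c j + 1) + 1 = c i - c j := by omega
                    calc ((c i - (c j + 1) : ℕ) : ℝ) + 1
                        = ((c i - (c j + 1) + 1 : ℕ) : ℝ) := by push_cast; ring
                      _ = ((c i - c j : ℕ) : ℝ) := by rw [h]
                  rw [hdl]; linarith
                · have hdl : dlt i j j B = 0 := by simp [dlt, hiB]
                  have hE := IHS (bump c j)
                  rw [bump_other c (Ne.symm hij), bump_same] at hE
                  have hcast : ((c i - (c j + 1) : ℕ) : ℝ) ≤ ((c i - c j : ℕ) : ℝ) :=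
                    Nat.cast_le.mpr (by omega)
                  rw [hdl]; linarith
              · have hE := IHS (bump c l)
                rw [bump_other c hli, bump_other c hlj] at hE
                rw [dlt0 l hli hlj]; linarith
        refine ⟨S, ?_⟩
        intro c c' hc h1 h2 h3
        have hcij : c j < c i := by omega
        have pairIH : ∀ l : Fin n, l ≠ i → l ≠ j →
            0 ≤ EV i j (bump c l) Bs + EV i j (bump c' l) Bs := by
          intro l hli hlj
          apply IHP
          · rw [bump_other c hli, bump_other c hlj]; exact hc
          · rw [bump_other c' hli, bump_other c hlj]; exact h1
          · rw [bump_other c' hlj, bump_other c hli]; exact h2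
          · intro x hxi hxj
            by_cases hlx : l = x
            · rw [← hlx, bump_same, bump_same, h3 l (hlx ▸ hxi) (hlx ▸ hxj)]
            · rw [bump_other c' hlx, bump_other c hlx]; exact h3 x hxi hxj
        have keyA : bump c' i = bump c j := by
          funext x
          by_cases hxi : x = i
          · rw [hxi, bump_same, bump_other c (Ne.symm hij), h1]; omega
          · by_cases hxj : x = j
            · rw [hxj, bump_other c' hij, bump_same, h2, hc]
            · rw [bump_other c' (fun h => hxi h.symm), bump_other c (fun h => hxj h.symm)]
              exact h3 x hxi hxj
        have hA : 0 ≤ EV i j (bump c j) Bs := by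
          have hE := IHS (bump c j)
          rw [bump_other c (Ne.symm hij), bump_same] at hE
          have hz : (c i - (c j + 1) : ℕ) = 0 := by omega
          rwa [hz, Nat.cast_zero, neg_zero] at hE
        have applyPair : msetC c B = msetC c' B → (∀ l ∈ msetC c B, l ≠ i) →
            (∀ l ∈ msetC c B, l ≠ j) → 0 ≤ EV i j c (B :: Bs) + EV i j c' (B :: Bs) := by
          intro hM hni hnj
          apply EV_pair hB hM
          intro l hl
          rw [dlt0 l (hni l hl) (hnj l hl)]
          have := pairIH l (hni l hl) (hnj l hl)
          linarith
        by_cases hiB : i ∈ B <;> by_cases hjB : j ∈ B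
        · -- CASE 2 : i ∈ B, j ∈ B
          have hiM : i ∉ msetC c B := fun h => by
            have := (mem_msetC.mp h).2 j hjB; omega
          have hjM' : j ∉ msetC c' B := fun h => by
            have := (mem_msetC.mp h).2 i hiB; rw [h2, h1] at this; omega
          by_cases hjM : j ∈ msetC c B
          · -- 2b
            have hjmin := (mem_msetC.mp hjM).2
            have hiM' : i ∈ msetC c' B := by
              refine mem_msetC.mpr ⟨hiB, fun y hy => ?_⟩
              by_cases hyi : y = i
              · rw [hyi]
              · by_cases hyj : y = j
                · rw [hyj, h1, h2]; omega
                · rw [h1, h3 y hyi hyj]; exact hjmin y hy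
            have hEE : (msetC c' B).erase i = (msetC c B).erase j := by
              ext l
              simp only [Finset.mem_erase, mem_msetC]
              constructor
              · rintro ⟨hli, hlB, hmin⟩
                have hlj : l ≠ j := fun h => hjM' (h ▸ mem_msetC.mpr ⟨hlB, hmin⟩)
                refine ⟨hlj, hlB, fun y hy => ?_⟩
                by_cases hyi : y = i
                · rw [hyi]
                  have := hmin j hjB; rw [h2, h3 l hli hlj] at this; exact this
                · by_cases hyj : y = j
                  · rw [hyj]
                    have := hmin i hiB; rw [h1, h3 l hli hlj] at this; exact this
                  · have := hmin y hy; rwa [h3 l hli hlj, h3 y hyi hyj] at this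
              · rintro ⟨hlj, hlB, hmin⟩
                have hli : l ≠ i := fun h => hiM (h ▸ mem_msetC.mpr ⟨hlB, hmin⟩)
                have hlecj : c l ≤ c j := hmin j hjB
                refine ⟨hli, hlB, fun y hy => ?_⟩
                by_cases hyi : y = i
                · rw [hyi, h1, h3 l hli hlj]; exact hlecj
                · by_cases hyj : y = j
                  · rw [hyj, h2, h3 l hli hlj]; omega
                  · rw [h3 l hli hlj, h3 y hyi hyj]; exact hmin y hy
            have hM'ins : msetC c' B = insert i ((msetC c B).erase j) := by
              rw [← hEE]; exact (Finset.insert_erase hiM').symm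
            have hiO : i ∉ (msetC c B).erase j := fun h => hiM (Finset.mem_erase.mp h).2
            have hcard2 : ((insert i ((msetC c B).erase j)).card : ℝ)
                = ((msetC c B).card : ℝ) := by
              rw [Finset.card_insert_of_notMem hiO, Finset.card_erase_of_mem hjM]
              have : 0 < (msetC c B).card := Finset.card_pos.mpr ⟨j, hjM⟩
              have h' : (msetC c B).card - 1 + 1 = (msetC c B).card := by omega
              exact_mod_cast congrArg (Nat.cast (R := ℝ)) h'
            rw [EV_cons_ne hB, EV_cons_ne hB, hM'ins, Finset.sum_insert hiO]
            simp only [hcard2]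
            rw [← Finset.add_sum_erase _ _ hjM]
            have hdi : dlt i j i B = 1 := by simp [dlt, hiB, hij]
            have hdj : dlt i j j B = -1 := by simp [dlt, hiB, Ne.symm hij]
            rw [hdi, hdj, keyA]
            have hsums : 0 ≤ ∑ l ∈ (msetC c B).erase j,
                  (1 / ((msetC c B).card : ℝ)) * (dlt i j l B + EV i j (bump c l) Bs)
                + ∑ l ∈ (msetC c B).erase j,
                  (1 / ((msetC c B).card : ℝ)) * (dlt i j l B + EV i j (bump c' l) Bs) := by
              rw [← Finset.sum_add_distrib]
              apply Finset.sum_nonneg; intro l hl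
              have hlj : l ≠ j := (Finset.mem_erase.mp hl).1
              have hli : l ≠ i := fun h => hiM (h ▸ (Finset.mem_erase.mp hl).2)
              rw [← mul_add]
              apply mul_nonneg (by positivity)
              rw [dlt0 l hli hlj]
              have := pairIH l hli hlj
              linarith
            have hcoef : (0:ℝ) ≤ 1 / ((msetC c B).card : ℝ) := by positivity
            nlinarith [mul_nonneg hcoef hA]
          · -- 2a
            obtain ⟨y, hyB, hylt⟩ : ∃ y ∈ B, c y < c j := by
              by_contra hcon; push_neg at hcon
              exact hjM (mem_msetC.mpr ⟨hjB, hcon⟩)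
            have hyi : y ≠ i := fun h => by rw [h] at hylt; omega
            have hyj : y ≠ j := fun h => by rw [h] at hylt; omega
            have hy' : c' y = c y := h3 y hyi hyj
            have hM : msetC c B = msetC c' B := by
              ext l; simp only [mem_msetC]
              constructor
              · rintro ⟨hlB, hmin⟩
                have hli : l ≠ i := fun h => hiM (h ▸ mem_msetC.mpr ⟨hlB, hmin⟩)
                have hly : c l ≤ c y := hmin y hyB
                have hlj : l ≠ j := fun h => by rw [h] at hly; omega
                refine ⟨hlB, fun z hz => ?_⟩
                by_cases hzi : z = i
                · rw [hzi, h1, h3 l hli hlj]; omega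
                · by_cases hzj : z = j
                  · rw [hzj, h2, h3 l hli hlj]
                    exact hmin i hiB
                  · rw [h3 l hli hlj, h3 z hzi hzj]; exact hmin z hz
              · rintro ⟨hlB, hmin⟩
                have hlj : l ≠ j := fun h => hjM' (h ▸ mem_msetC.mpr ⟨hlB, hmin⟩)
                have hli : l ≠ i := fun h => by
                  have := hmin y hyB
                  rw [h, h1, hy'] at this
                  omega
                have hlecj : c l ≤ c j := by
                  have := hmin i hiB; rwa [h1, h3 l hli hlj] at this
                refine ⟨hlB, fun z hz => ?_⟩
                by_cases hzi : z = i
                · rw [hzi]; omega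
                · by_cases hzj : z = j
                  · rw [hzj]; exact hlecj
                  · have := hmin z hz; rwa [h3 l hli hlj, h3 z hzi hzj] at this
            apply applyPair hM
            · exact fun l hl h => hiM (h ▸ hl)
            · exact fun l hl h => hjM (h ▸ hl)
        · -- CASE 3 : i ∈ B, j ∉ B
          by_cases hiM : i ∈ msetC c B
          · -- 3c : i ∈ msetC c B ⇒ msetC c' B = {i}
            have himin := (mem_msetC.mp hiM).2
            have hM' : msetC c' B = {i} := by
              apply Finset.eq_singleton_iff_unique_mem.mpr
              constructor
              · refine mem_msetC.mpr ⟨hiB, fun y hy => ?_⟩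
                by_cases hyi : y = i
                · rw [hyi]
                · have hyj : y ≠ j := fun h => hjB (h ▸ hy)
                  rw [h1, h3 y hyi hyj]
                  have := himin y hy; omega
              · intro l hl
                by_contra hli
                have hlB := msetC_subset hl
                have hlj : l ≠ j := fun h => hjB (h ▸ hlB)
                have h1l := (mem_msetC.mp hl).2 i hiB
                rw [h1, h3 l hli hlj] at h1l
                have := himin l hlB; omega
            have hEc' : EV i j c' (B :: Bs) = 1 + EV i j (bump c j) Bs := by
              rw [EV_cons_ne hB, hM', Finset.sum_singleton, keyA]
              have hdi : dlt i j i B = 1 := by simp [dlt, hiB, hij]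
              rw [hdi]; simp
            have hEc : (-1 : ℝ) ≤ EV i j c (B :: Bs) := by
              apply EV_lower hB
              intro l hl
              have hlB := msetC_subset hl
              have hlj : l ≠ j := fun h => hjB (h ▸ hlB)
              by_cases hli : l = i
              · rw [hli]
                have hE := IHS (bump c i)
                rw [bump_same, bump_other c hij] at hE
                have hdi : dlt i j i B = 1 := by simp [dlt, hiB, hij]
                have hcast : ((c i + 1 - c j : ℕ) : ℝ) = 2 := by
                  exact_mod_cast congrArg (Nat.cast (R := ℝ)) (show c i + 1 - c j = 2 by omega)
                rw [hcast] at hE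
                rw [hdi]
                linarith
              · have hE := IHS (bump c l)
                rw [bump_other c hli, bump_other c hlj] at hE
                have hcast : ((c i - c j : ℕ) : ℝ) = 1 := by
                  exact_mod_cast congrArg (Nat.cast (R := ℝ)) (show c i - c j = 1 by omega)
                rw [hcast] at hE
                rw [dlt0 l hli hlj]
                linarith
            rw [hEc']
            linarith
          · obtain ⟨y, hyB, hylt⟩ : ∃ y ∈ B, c y < c i := by
              by_contra hcon; push_neg at hcon
              exact hiM (mem_msetC.mpr ⟨hiB, hcon⟩)
            have hyi : y ≠ i := fun h => by rw [h] at hylt; omega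
            have hyj : y ≠ j := fun h => hjB (h ▸ hyB)
            have hy' : c' y = c y := h3 y hyi hyj
            by_cases hiM' : i ∈ msetC c' B
            · -- 3b
              have himin' := (mem_msetC.mp hiM').2
              have hycj : c y = c j := by
                have := himin' y hyB; rw [h1, hy'] at this; omega
              have hMins : msetC c' B = insert i (msetC c B) := by
                ext l
                simp only [Finset.mem_insert, mem_msetC]
                constructor
                · intro hl
                  by_cases hli : l = i
                  · exact Or.inl hli
                  · obtain ⟨hlB, hmin⟩ := hl
                    have hlj : l ≠ j := fun h => hjB (h ▸ hlB)
                    have hlcj : c l ≤ c j := by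
                      have := hmin y hyB; rwa [h3 l hli hlj, hy', hycj] at this
                    refine Or.inr ⟨hlB, fun z hz => ?_⟩
                    by_cases hzi : z = i
                    · rw [hzi]; omega
                    · have hzj : z ≠ j := fun h => hjB (h ▸ hz)
                      have := hmin z hz; rwa [h3 l hli hlj, h3 z hzi hzj] at this
                · intro hl
                  rcases hl with hli | ⟨hlB, hmin⟩
                  · rw [hli]; exact mem_msetC.mp hiM'
                  · have hli : l ≠ i := fun h => hiM (h ▸ mem_msetC.mpr ⟨hlB, hmin⟩)
                    have hlj : l ≠ j := fun h => hjB (h ▸ hlB)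
                    have hlcy : c l ≤ c y := hmin y hyB
                    refine ⟨hlB, fun z hz => ?_⟩
                    by_cases hzi : z = i
                    · rw [hzi, h3 l hli hlj, h1]; omega
                    · have hzj : z ≠ j := fun h => hjB (h ▸ hz)
                      rw [h3 l hli hlj, h3 z hzi hzj]; exact hmin z hz
              have hMne : (msetC c B).Nonempty := by
                refine ⟨y, mem_msetC.mpr ⟨hyB, fun z hz => ?_⟩⟩
                by_cases hzi : z = i
                · rw [hzi]; omega
                · have hzj : z ≠ j := fun h => hjB (h ▸ hz)
                  have := himin' z hz; rw [h1, h3 z hzi hzj] at this; omega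
              have hiMn : i ∉ msetC c B := hiM
              set s : ℝ := ((msetC c B).card : ℝ) with hs
              have hs1 : (1:ℝ) ≤ s := by
                rw [hs]
                exact_mod_cast Finset.card_pos.mpr hMne
              have hcardi : ((insert i (msetC c B)).card : ℝ) = s + 1 := by
                rw [Finset.card_insert_of_notMem hiMn]; push_cast [hs]; ring
              rw [EV_cons_ne hB, EV_cons_ne hB, hMins, Finset.sum_insert hiMn]
              simp only [hcardi]
              have hdi : dlt i j i B = 1 := by simp [dlt, hiB, hij]
              rw [hdi, keyA]
              have hS1 : ∑ l ∈ msetC c B, (1 / s) * (dlt i j l B + EV i j (bump c l) Bs)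
                  = (1 / s) * ∑ l ∈ msetC c B, EV i j (bump c l) Bs := by
                rw [Finset.mul_sum]
                apply Finset.sum_congr rfl; intro l hl
                rw [dlt0 l (fun h => hiMn (h ▸ hl)) (fun h => hjB (h ▸ msetC_subset hl)),
                  zero_add]
              have hS2 : ∑ l ∈ msetC c B, (1 / (s+1)) * (dlt i j l B + EV i j (bump c' l) Bs)
                  = (1 / (s+1)) * ∑ l ∈ msetC c B, EV i j (bump c' l) Bs := by
                rw [Finset.mul_sum]
                apply Finset.sum_congr rfl; intro l hl
                rw [dlt0 l (fun h => hiMn (h ▸ hl)) (fun h => hjB (h ▸ msetC_subset hl)),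
                  zero_add]
              rw [hS1, hS2]
              set S1 := ∑ l ∈ msetC c B, EV i j (bump c l) Bs
              set S2 := ∑ l ∈ msetC c B, EV i j (bump c' l) Bs
              have hpairs : 0 ≤ S1 + S2 := by
                rw [← Finset.sum_add_distrib]
                apply Finset.sum_nonneg; intro l hl
                exact pairIH l (fun h => hiMn (h ▸ hl)) (fun h => hjB (h ▸ msetC_subset hl))
              have hS1low : -s ≤ S1 := by
                have : ∀ l ∈ msetC c B, (-1 : ℝ) ≤ EV i j (bump c l) Bs := by
                  intro l hl
                  have hli : l ≠ i := fun h => hiMn (h ▸ hl)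
                  have hlj : l ≠ j := fun h => hjB (h ▸ msetC_subset hl)
                  have hE := IHS (bump c l)
                  rw [bump_other c hli, bump_other c hlj] at hE
                  have hcast : ((c i - c j : ℕ) : ℝ) = 1 := by
                    exact_mod_cast congrArg (Nat.cast (R := ℝ)) (show c i - c j = 1 by omega)
                  rw [hcast] at hE; linarith
                calc -s = ∑ _l ∈ msetC c B, (-1 : ℝ) := by
                      rw [Finset.sum_const, nsmul_eq_mul, hs]; ring
                  _ ≤ S1 := Finset.sum_le_sum this
              set A := EV i j (bump c j) Bs
              have hs0 : (0:ℝ) < s := by linarith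
              have hs0' : s ≠ 0 := ne_of_gt hs0
              have hs1' : s + 1 ≠ 0 := by positivity
              have key : (1 / s) * S1 + ((1 / (s+1)) * (1 + A) + (1 / (s+1)) * S2)
                  = (S1 + s) / (s * (s + 1)) + (1 / (s+1)) * (A + (S1 + S2)) := by
                field_simp; ring
              rw [key]
              have t1 : 0 ≤ (S1 + s) / (s * (s + 1)) := by
                apply div_nonneg (by linarith) (by positivity)
              have t2 : 0 ≤ (1 / (s+1)) * (A + (S1 + S2)) := by
                apply mul_nonneg (by positivity) (by linarith)
              linarith
            · -- 3a
              obtain ⟨z, hzB, hzlt⟩ : ∃ z ∈ B, c' z < c j := by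
                by_contra hcon; push_neg at hcon
                apply hiM'
                refine mem_msetC.mpr ⟨hiB, fun w hw => ?_⟩
                rw [h1]; exact hcon w hw
              have hzi : z ≠ i := fun h => by rw [h, h1] at hzlt; omega
              have hzj : z ≠ j := fun h => hjB (h ▸ hzB)
              have hz' : c' z = c z := h3 z hzi hzj
              rw [hz'] at hzlt
              have hM : msetC c B = msetC c' B := by
                ext l; simp only [mem_msetC]
                constructor
                · rintro ⟨hlB, hmin⟩
                  have hli : l ≠ i := fun h => by
                    have := hmin z hzB; rw [h] at this; omega
                  have hlj : l ≠ j := fun h => hjB (h ▸ hlB)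
                  have hlz : c l ≤ c z := hmin z hzB
                  refine ⟨hlB, fun w hw => ?_⟩
                  by_cases hwi : w = i
                  · rw [hwi, h1, h3 l hli hlj]; omega
                  · have hwj : w ≠ j := fun h => hjB (h ▸ hw)
                    rw [h3 l hli hlj, h3 w hwi hwj]; exact hmin w hw
                · rintro ⟨hlB, hmin⟩
                  have hli : l ≠ i := fun h => hiM' (h ▸ mem_msetC.mpr ⟨hlB, hmin⟩)
                  have hlj : l ≠ j := fun h => hjB (h ▸ hlB)
                  have hlz : c l ≤ c z := by
                    have := hmin z hzB; rwa [h3 l hli hlj, hz'] at this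
                  refine ⟨hlB, fun w hw => ?_⟩
                  by_cases hwi : w = i
                  · rw [hwi]; omega
                  · have hwj : w ≠ j := fun h => hjB (h ▸ hw)
                    have := hmin w hw; rwa [h3 l hli hlj, h3 w hwi hwj] at this
              apply applyPair hM
              · exact fun l hl h => hiM (h ▸ hl)
              · exact fun l hl h => hjB (h ▸ msetC_subset hl)
        · -- CASE 4 : i ∉ B, j ∈ B
          have dlt0B : ∀ l : Fin n, dlt i j l B = 0 := by intro l; simp [dlt, hiB]
          by_cases hjM' : j ∈ msetC c' B
          · -- 4c : msetC c B = {j}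
            have hjmin' := (mem_msetC.mp hjM').2
            have hothers : ∀ z ∈ B, z ≠ j → c i ≤ c z := by
              intro z hz hzj
              have hzi : z ≠ i := fun h => hiB (h ▸ hz)
              have := hjmin' z hz; rwa [h2, h3 z hzi hzj] at this
            have hMj : msetC c B = {j} := by
              apply Finset.eq_singleton_iff_unique_mem.mpr
              constructor
              · refine mem_msetC.mpr ⟨hjB, fun z hz => ?_⟩
                by_cases hzj : z = j
                · rw [hzj]
                · have := hothers z hz hzj; omega
              · intro l hl
                by_contra hlj
                have hlB := msetC_subset hl
                have hle := (mem_msetC.mp hl).2 j hjB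
                have := hothers l hlB hlj
                omega
            have hEc : EV i j c (B :: Bs) = EV i j (bump c j) Bs := by
              rw [EV_cons_ne hB, hMj, Finset.sum_singleton, dlt0B]; simp
            have hEc' : (0:ℝ) ≤ EV i j c' (B :: Bs) := by
              apply EV_lower hB
              intro l hl
              have hlB := msetC_subset hl
              have hli : l ≠ i := fun h => hiB (h ▸ hlB)
              rw [dlt0B, zero_add]
              by_cases hlj : l = j
              · rw [hlj]
                have hE := IHS (bump c' j)
                rw [bump_other c' (Ne.symm hij), bump_same, h1, h2] at hE
                have hz : (c j - (c i + 1) : ℕ) = 0 := by omega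
                rwa [hz, Nat.cast_zero, neg_zero] at hE
              · have hE := IHS (bump c' l)
                rw [bump_other c' hli, bump_other c' hlj, h1, h2] at hE
                have hz : (c j - c i : ℕ) = 0 := by omega
                rwa [hz, Nat.cast_zero, neg_zero] at hE
            rw [hEc]; linarith
          · by_cases hjM : j ∈ msetC c B
            · -- 4b
              have hjmin := (mem_msetC.mp hjM).2
              obtain ⟨y, hyB, hylt⟩ : ∃ y ∈ B, c' y < c i := by
                by_contra hcon; push_neg at hcon
                apply hjM'
                refine mem_msetC.mpr ⟨hjB, fun w hw => ?_⟩
                rw [h2]; exact hcon w hw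
              have hyj : y ≠ j := fun h => by rw [h, h2] at hylt; omega
              have hyi : y ≠ i := fun h => hiB (h ▸ hyB)
              have hy' : c' y = c y := h3 y hyi hyj
              rw [hy'] at hylt
              have hycj : c y = c j := by have := hjmin y hyB; omega
              have hMins : msetC c B = insert j (msetC c' B) := by
                ext l
                simp only [Finset.mem_insert, mem_msetC]
                constructor
                · rintro ⟨hlB, hmin⟩
                  by_cases hlj : l = j
                  · exact Or.inl hlj
                  · have hli : l ≠ i := fun h => hiB (h ▸ hlB)
                    have hlcy : c l ≤ c y := hmin y hyB
                    refine Or.inr ⟨hlB, fun z hz => ?_⟩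
                    by_cases hzj : z = j
                    · rw [hzj, h2, h3 l hli hlj]; omega
                    · have hzi : z ≠ i := fun h => hiB (h ▸ hz)
                      rw [h3 l hli hlj, h3 z hzi hzj]; exact hmin z hz
                · intro hl
                  rcases hl with hlj | ⟨hlB, hmin⟩
                  · rw [hlj]; exact mem_msetC.mp hjM
                  · have hlj : l ≠ j := fun h => hjM' (h ▸ mem_msetC.mpr ⟨hlB, hmin⟩)
                    have hli : l ≠ i := fun h => hiB (h ▸ hlB)
                    have hlcj : c l ≤ c j := by
                      have := hmin y hyB; rwa [h3 l hli hlj, hy', hycj] at this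
                    refine ⟨hlB, fun z hz => ?_⟩
                    by_cases hzj : z = j
                    · rw [hzj]; exact hlcj
                    · have hzi : z ≠ i := fun h => hiB (h ▸ hz)
                      have := hmin z hz; rwa [h3 l hli hlj, h3 z hzi hzj] at this
              have hM'ne : (msetC c' B).Nonempty := by
                refine ⟨y, mem_msetC.mpr ⟨hyB, fun z hz => ?_⟩⟩
                rw [hy', hycj]
                by_cases hzj : z = j
                · rw [hzj, h2]; omega
                · have hzi : z ≠ i := fun h => hiB (h ▸ hz)
                  rw [h3 z hzi hzj]; exact hjmin z hz
              have hjM'n : j ∉ msetC c' B := hjM'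
              set s : ℝ := ((msetC c' B).card : ℝ) with hs
              have hs1 : (1:ℝ) ≤ s := by
                rw [hs]
                exact_mod_cast Finset.card_pos.mpr hM'ne
              have hcardi : ((insert j (msetC c' B)).card : ℝ) = s + 1 := by
                rw [Finset.card_insert_of_notMem hjM'n]; push_cast [hs]; ring
              rw [EV_cons_ne hB, EV_cons_ne hB, hMins, Finset.sum_insert hjM'n]
              simp only [hcardi, dlt0B, zero_add]
              rw [← Finset.mul_sum, ← Finset.mul_sum]
              set S1 := ∑ l ∈ msetC c' B, EV i j (bump c l) Bs
              set S2 := ∑ l ∈ msetC c' B, EV i j (bump c' l) Bs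
              have hpairs : 0 ≤ S1 + S2 := by
                rw [← Finset.sum_add_distrib]
                apply Finset.sum_nonneg; intro l hl
                exact pairIH l (fun h => hiB (h ▸ msetC_subset hl))
                  (fun h => hjM'n (h ▸ hl))
              have hS2 : 0 ≤ S2 := by
                apply Finset.sum_nonneg; intro l hl
                have hli : l ≠ i := fun h => hiB (h ▸ msetC_subset hl)
                have hlj : l ≠ j := fun h => hjM'n (h ▸ hl)
                have hE := IHS (bump c' l)
                rw [bump_other c' hli, bump_other c' hlj, h1, h2] at hE
                have hz : (c j - c i : ℕ) = 0 := by omega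
                rwa [hz, Nat.cast_zero, neg_zero] at hE
              set A := EV i j (bump c j) Bs
              have hs0 : (0:ℝ) < s := by linarith
              have hs0' : s ≠ 0 := ne_of_gt hs0
              have hs1' : s + 1 ≠ 0 := by positivity
              rw [← hs]
              have key : (1 / (s+1)) * A + (1 / (s+1)) * S1 + (1 / s) * S2
                  = (1 / (s+1)) * (A + (S1 + S2)) + S2 * (1 / (s * (s + 1))) := by
                field_simp; ring
              rw [key]
              have t1 : 0 ≤ (1 / (s+1)) * (A + (S1 + S2)) := by
                apply mul_nonneg (by positivity) (by linarith)
              have t2 : 0 ≤ S2 * (1 / (s * (s + 1))) := by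
                apply mul_nonneg hS2 (by positivity)
              linarith
            · -- 4a
              obtain ⟨y, hyB, hylt⟩ : ∃ y ∈ B, c y < c j := by
                by_contra hcon; push_neg at hcon
                exact hjM (mem_msetC.mpr ⟨hjB, hcon⟩)
              have hyj : y ≠ j := fun h => by rw [h] at hylt; omega
              have hyi : y ≠ i := fun h => hiB (h ▸ hyB)
              have hy' : c' y = c y := h3 y hyi hyj
              have hM : msetC c B = msetC c' B := by
                ext l; simp only [mem_msetC]
                constructor
                · rintro ⟨hlB, hmin⟩
                  have hli : l ≠ i := fun h => hiB (h ▸ hlB)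
                  have hly : c l ≤ c y := hmin y hyB
                  have hlj : l ≠ j := fun h => by rw [h] at hly; omega
                  refine ⟨hlB, fun z hz => ?_⟩
                  by_cases hzj : z = j
                  · rw [hzj, h2, h3 l hli hlj]; omega
                  · have hzi : z ≠ i := fun h => hiB (h ▸ hz)
                    rw [h3 l hli hlj, h3 z hzi hzj]; exact hmin z hz
                · rintro ⟨hlB, hmin⟩
                  have hli : l ≠ i := fun h => hiB (h ▸ hlB)
                  have hlj : l ≠ j := fun h => hjM' (h ▸ mem_msetC.mpr ⟨hlB, hmin⟩)
                  have hly : c l ≤ c y := by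
                    have := hmin y hyB; rwa [h3 l hli hlj, hy'] at this
                  refine ⟨hlB, fun z hz => ?_⟩
                  by_cases hzj : z = j
                  · rw [hzj]; omega
                  · have hzi : z ≠ i := fun h => hiB (h ▸ hz)
                    have := hmin z hz; rwa [h3 l hli hlj, h3 z hzi hzj] at this
              apply applyPair hM
              · exact fun l hl h => hiB (h ▸ msetC_subset hl)
              · exact fun l hl h => hjM (h ▸ hl)
        · -- CASE 1 : i ∉ B, j ∉ B
          have hcc : ∀ x ∈ B, c' x = c x := fun x hx =>
            h3 x (fun h => hiB (h ▸ hx)) (fun h => hjB (h ▸ hx))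
          have hM : msetC c B = msetC c' B := by
            ext l; simp only [mem_msetC]
            constructor
            · rintro ⟨hlB, hmin⟩
              exact ⟨hlB, fun y hy => by rw [hcc l hlB, hcc y hy]; exact hmin y hy⟩
            · rintro ⟨hlB, hmin⟩
              refine ⟨hlB, fun y hy => ?_⟩
              have := hmin y hy; rwa [hcc l hlB, hcc y hy] at this
          apply applyPair hM
          · exact fun l hl h => hiB (h ▸ msetC_subset hl)
          · exact fun l hl h => hjB (h ▸ msetC_subset hl)


def stepC {n m : ℕ} (c : Fin n → ℕ) (B : Fin m → Finset (Fin n))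
    (a : Fin m → Option (Fin n)) (k : Fin m) : ℝ :=
  if B k = ∅ then (if a k = none then 1 else 0)
  else
    match a k with
    | none => 0
    | some l => if l ∈ msetC (fun x => c x + countBefore a x k) (B k) then
        1 / ((msetC (fun x => c x + countBefore a x k) (B k)).card : ℝ) else 0

lemma countBefore_zero {n m : ℕ} (a : Fin (m+1) → Option (Fin n)) (x : Fin n) :
    countBefore a x 0 = 0 := by
  simp [countBefore]

lemma countBefore_cons {n m : ℕ} (o : Option (Fin n)) (a : Fin m → Option (Fin n))
    (x : Fin n) (k : Fin m) :
    countBefore (Fin.cons o a) x k.succ = (if o = some x then 1 else 0) + countBefore a x k := by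
  unfold countBefore
  rw [Finset.card_filter, Finset.card_filter, Fin.sum_univ_succ]
  congr 1
  · simp [Fin.succ_pos]
  · exact Finset.sum_congr rfl fun k' _ => by simp [Fin.cons_succ, Fin.succ_lt_succ_iff]

lemma stepC_zero_eq {n m : ℕ} (B : Fin m → Finset (Fin n)) (a : Fin m → Option (Fin n))
    (k : Fin m) :
    stepC (fun _ => 0) B a k = stepProb (fun _ => (1:ℝ)) B a k := by
  have hms : msetC (fun x => (fun _ : Fin n => 0) x + countBefore a x k) (B k)
      = minSet (fun _ => (1:ℝ)) B a k := by
    unfold msetC minSet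
    apply Finset.filter_congr
    intro x _
    constructor
    · intro h l hl
      simp only [div_one]
      have := h l hl
      simp only [zero_add] at this
      exact_mod_cast this
    · intro h l hl
      have := h l hl
      simp only [div_one] at this
      simp only [zero_add]
      exact_mod_cast this
  unfold stepC stepProb
  rw [hms]


lemma stepC_cons_zero {n m : ℕ} (c : Fin n → ℕ) (B : Fin (m+1) → Finset (Fin n))
    (o : Option (Fin n)) (a : Fin m → Option (Fin n)) :
    stepC c B (Fin.cons o a) 0
      = (if B 0 = ∅ then (if o = none then 1 else 0)
        else match o with
          | none => 0
          | some l => if l ∈ msetC c (B 0) then 1 / ((msetC c (B 0)).card : ℝ) else 0) := by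
  have hcnt : (fun x => c x + countBefore (Fin.cons o a) x 0) = c := by
    funext x; rw [countBefore_zero]; ring
  unfold stepC
  rw [hcnt, Fin.cons_zero]

lemma stepC_cons_succ {n m : ℕ} (c : Fin n → ℕ) (B : Fin (m+1) → Finset (Fin n))
    (o : Option (Fin n)) (a : Fin m → Option (Fin n)) (k : Fin m) :
    stepC c B (Fin.cons o a) k.succ
      = stepC (fun x => c x + if o = some x then 1 else 0) (fun k' => B k'.succ) a k := by
  have hcnt : (fun x => c x + countBefore (Fin.cons o a) x k.succ)
      = (fun x => (c x + if o = some x then 1 else 0) + countBefore a x k) := by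
    funext x; rw [countBefore_cons]; ring
  unfold stepC
  rw [hcnt, Fin.cons_succ]

lemma sum_option_step {n : ℕ} (c : Fin n → ℕ) (B0 : Finset (Fin n)) :
    ∑ o : Option (Fin n),
      (if B0 = ∅ then (if o = none then (1:ℝ) else 0)
        else match o with
          | none => 0
          | some l => if l ∈ msetC c B0 then 1 / ((msetC c B0).card : ℝ) else 0) = 1 := by
  rw [Fintype.sum_option]
  by_cases hB : B0 = ∅
  · simp [hB]
  · have hne : (msetC c B0).Nonempty := msetC_nonempty (Finset.nonempty_iff_ne_empty.mpr hB)
    have hcard : (0:ℝ) < ((msetC c B0).card : ℝ) := by exact_mod_cast Finset.card_pos.mpr hne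
    simp only [hB, if_false]
    rw [Finset.sum_ite_mem, Finset.univ_inter, Finset.sum_const, nsmul_eq_mul]
    field_simp
    norm_num

lemma sum_pi_option_succ {n m : ℕ} (f : (Fin (m+1) → Option (Fin n)) → ℝ) :
    ∑ a : Fin (m+1) → Option (Fin n), f a
      = ∑ o : Option (Fin n), ∑ a' : Fin m → Option (Fin n), f (Fin.cons o a') := by
  rw [← (Fin.consEquiv (fun _ : Fin (m+1) => Option (Fin n))).sum_comp f,
    Fintype.sum_prod_type]
  rfl

lemma prod_stepC_cons {n m : ℕ} (c : Fin n → ℕ) (B : Fin (m+1) → Finset (Fin n))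
    (o : Option (Fin n)) (a' : Fin m → Option (Fin n)) :
    (∏ k, stepC c B (Fin.cons o a') k)
      = (if B 0 = ∅ then (if o = none then 1 else 0)
        else match o with
          | none => 0
          | some l => if l ∈ msetC c (B 0) then 1 / ((msetC c (B 0)).card : ℝ) else 0)
        * ∏ k : Fin m, stepC (fun x => c x + if o = some x then 1 else 0)
            (fun k' => B k'.succ) a' k := by
  rw [Fin.prod_univ_succ, stepC_cons_zero]
  congr 1
  exact Finset.prod_congr rfl fun k _ => stepC_cons_succ c B o a' k

lemma total_mass {n : ℕ} : ∀ (m : ℕ) (B : Fin m → Finset (Fin n)) (c : Fin n → ℕ),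
    ∑ a : Fin m → Option (Fin n), ∏ k, stepC c B a k = 1 := by
  intro m
  induction m with
  | zero =>
      intro B c
      rw [Fintype.sum_unique]
      exact Finset.prod_of_isEmpty _
  | succ m IH =>
      intro B c
      rw [sum_pi_option_succ (fun a => ∏ k, stepC c B a k)]
      have h1 : ∀ o : Option (Fin n),
          ∑ a' : Fin m → Option (Fin n), ∏ k, stepC c B (Fin.cons o a') k
          = (if B 0 = ∅ then (if o = none then 1 else 0)
            else match o with
              | none => 0
              | some l => if l ∈ msetC c (B 0) then 1 / ((msetC c (B 0)).card : ℝ) else 0) := by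
        intro o
        calc ∑ a' : Fin m → Option (Fin n), ∏ k, stepC c B (Fin.cons o a') k
            = ∑ a' : Fin m → Option (Fin n),
              (if B 0 = ∅ then (if o = none then 1 else 0)
                else match o with
                  | none => 0
                  | some l => if l ∈ msetC c (B 0) then 1 / ((msetC c (B 0)).card : ℝ) else 0)
                * ∏ k : Fin m, stepC (fun x => c x + if o = some x then 1 else 0)
                    (fun k' => B k'.succ) a' k :=
              Finset.sum_congr rfl fun a' _ => prod_stepC_cons c B o a'
          _ = _ := by rw [← Finset.mul_sum, IH, mul_one]
      rw [Finset.sum_congr rfl fun o _ => h1 o]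
      exact sum_option_step c (B 0)

def valF {n m : ℕ} (i j : Fin n) (B : Fin m → Finset (Fin n))
    (a : Fin m → Option (Fin n)) : ℝ :=
  ∑ k, if i ∈ B k then
    ((if a k = some i then (1:ℝ) else 0) - (if a k = some j then 1 else 0)) else 0

lemma valF_cons {n m : ℕ} (i j : Fin n) (B : Fin (m+1) → Finset (Fin n))
    (o : Option (Fin n)) (a' : Fin m → Option (Fin n)) :
    valF i j B (Fin.cons o a')
      = (if i ∈ B 0 then
          ((if o = some i then (1:ℝ) else 0) - (if o = some j then 1 else 0)) else 0)
        + valF i j (fun k' => B k'.succ) a' := by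
  unfold valF
  rw [Fin.sum_univ_succ]
  simp [Fin.cons_succ, Fin.cons_zero]

lemma bridge {n : ℕ} (i j : Fin n) : ∀ (m : ℕ) (B : Fin m → Finset (Fin n)) (c : Fin n → ℕ),
    ∑ a : Fin m → Option (Fin n), (∏ k, stepC c B a k) * valF i j B a
      = EV i j c (List.ofFn B) := by
  intro m
  induction m with
  | zero =>
      intro B c
      rw [Fintype.sum_unique]
      simp [valF, EV, List.ofFn_zero]
  | succ m IH =>
      intro B c
      rw [sum_pi_option_succ (fun a => (∏ k, stepC c B a k) * valF i j B a)]
      have h1 : ∀ o : Option (Fin n),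
          ∑ a' : Fin m → Option (Fin n),
            (∏ k, stepC c B (Fin.cons o a') k) * valF i j B (Fin.cons o a')
          = (if B 0 = ∅ then (if o = none then 1 else 0)
            else match o with
              | none => 0
              | some l => if l ∈ msetC c (B 0) then 1 / ((msetC c (B 0)).card : ℝ) else 0)
            * ((if i ∈ B 0 then
                ((if o = some i then (1:ℝ) else 0) - (if o = some j then 1 else 0)) else 0)
              + EV i j (fun x => c x + if o = some x then 1 else 0)
                  (List.ofFn (fun k' => B k'.succ))) := by
        intro o
        set p0 : ℝ := (if B 0 = ∅ then (if o = none then (1:ℝ) else 0)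
            else match o with
              | none => 0
              | some l => if l ∈ msetC c (B 0) then 1 / ((msetC c (B 0)).card : ℝ) else 0)
          with hp0
        set v0 : ℝ := (if i ∈ B 0 then
            ((if o = some i then (1:ℝ) else 0) - (if o = some j then 1 else 0)) else 0) with hv0
        set c1 : Fin n → ℕ := fun x => c x + if o = some x then 1 else 0 with hc1
        set B1 : Fin m → Finset (Fin n) := fun k' => B k'.succ with hB1
        calc ∑ a' : Fin m → Option (Fin n),
              (∏ k, stepC c B (Fin.cons o a') k) * valF i j B (Fin.cons o a')
            = ∑ a' : Fin m → Option (Fin n),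
              (p0 * ∏ k : Fin m, stepC c1 B1 a' k) * (v0 + valF i j B1 a') := by
              refine Finset.sum_congr rfl fun a' _ => ?_
              rw [prod_stepC_cons, valF_cons]
          _ = ∑ a' : Fin m → Option (Fin n),
                (p0 * v0 * ∏ k : Fin m, stepC c1 B1 a' k
                  + p0 * ((∏ k : Fin m, stepC c1 B1 a' k) * valF i j B1 a')) := by
              exact Finset.sum_congr rfl fun a' _ => by ring
          _ = p0 * v0 * (∑ a' : Fin m → Option (Fin n), ∏ k : Fin m, stepC c1 B1 a' k)
              + p0 * ∑ a' : Fin m → Option (Fin n),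
                  (∏ k : Fin m, stepC c1 B1 a' k) * valF i j B1 a' := by
              rw [Finset.sum_add_distrib, Finset.mul_sum, Finset.mul_sum]
          _ = p0 * (v0 + EV i j c1 (List.ofFn B1)) := by
              rw [total_mass m B1 c1, IH B1 c1]; ring
      rw [Finset.sum_congr rfl fun o _ => h1 o]
      rw [List.ofFn_succ]
      by_cases hB : B 0 = ∅
      · rw [Fintype.sum_option]
        simp only [hB, if_true, EV]
        have hc0 : (fun x => c x + if (none : Option (Fin n)) = some x then 1 else 0) = c := by
          funext x; simp
        simp [hc0]
      · rw [Fintype.sum_option]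
        simp only [hB, if_false]
        rw [EV_cons_ne hB]
        have h2 : ∀ l : Fin n,
            (fun x => c x + if some l = some x then 1 else 0) = bump c l := by
          intro l; funext x; simp [bump, Option.some_inj]
        have hterm : ∀ l : Fin n,
            (match (some l : Option (Fin n)) with
              | none => (0:ℝ)
              | some l' => if l' ∈ msetC c (B 0) then 1 / ((msetC c (B 0)).card : ℝ) else 0)
              * ((if i ∈ B 0 then
                  ((if some l = some i then (1:ℝ) else 0) - (if some l = some j then 1 else 0))
                  else 0)
                + EV i j (fun x => c x + if some l = some x then 1 else 0)
                    (List.ofFn fun k' => B k'.succ))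
            = (if l ∈ msetC c (B 0) then
                (1 / ((msetC c (B 0)).card : ℝ))
                  * (dlt i j l (B 0) + EV i j (bump c l) (List.ofFn fun k' => B k'.succ))
              else 0) := by
          intro l
          rw [h2 l]
          have hd : (if i ∈ B 0 then
              ((if some l = some i then (1:ℝ) else 0) - (if some l = some j then 1 else 0))
              else 0) = dlt i j l (B 0) := by
            simp [dlt, Option.some_inj]
          rw [hd]
          show (if l ∈ msetC c (B 0) then 1 / ((msetC c (B 0)).card : ℝ) else 0) * _ = _
          rw [ite_mul, zero_mul]
        rw [Finset.sum_congr rfl fun l _ => hterm l, Finset.sum_ite_mem, Finset.univ_inter]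
        show (0:ℝ) * _ + _ = _
        rw [zero_mul, zero_add]


/-- **The Balanced LIKE mechanism is envy-free ex-ante.**
With 0/1 utilities and all agents bidding truthfully (the bidders for item `k` are
exactly the agents `l` with `u l k > 0`), for every pair of agents `i` and `j`, agent
`i`'s expected utility for agent `j`'s random allocation under the Balanced LIKE
process (the Weighted Balanced LIKE process with all weights `1`) is at most agent
`i`'s expected utility for her own random allocation: `E[u_i(A_j)] ≤ E[u_i(A_i)]`. -/
theorem balancedLike_envyFree_exAnte (n m : ℕ) (u : Fin n → Fin m → ℝ)
    (h01 : ∀ i k, u i k = 0 ∨ u i k = 1) (B : Fin m → Finset (Fin n))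
    (hB : ∀ k, B k = Finset.univ.filter fun l => 0 < u l k) (i j : Fin n) :
    expUtil (fun _ => (1 : ℝ)) B (u i) j ≤ expUtil (fun _ => (1 : ℝ)) B (u i) i := by
  by_cases hij : i = j
  · rw [hij]
  · have hu : ∀ k, u i k = if i ∈ B k then 1 else 0 := by
      intro k
      by_cases hik : i ∈ B k
      · rw [if_pos hik]
        rw [hB k] at hik
        have hlt := (Finset.mem_filter.mp hik).2
        rcases h01 i k with h | h
        · rw [h] at hlt; exact absurd hlt (lt_irrefl 0)
        · exact h
      · rw [if_neg hik]
        rw [hB k] at hik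
        rcases h01 i k with h | h
        · exact h
        · exact absurd (Finset.mem_filter.mpr ⟨Finset.mem_univ i, by rw [h]; norm_num⟩) hik
    have hval : ∀ a : Fin m → Option (Fin n),
        realizedUtil (u i) a i - realizedUtil (u i) a j = valF i j B a := by
      intro a
      unfold realizedUtil valF
      rw [← Finset.sum_sub_distrib]
      refine Finset.sum_congr rfl fun k _ => ?_
      rw [hu k]
      by_cases hik : i ∈ B k
      · simp [hik]
      · simp [hik]
    have hprob : ∀ a : Fin m → Option (Fin n),
        outcomeProb (fun _ => (1:ℝ)) B a = ∏ k, stepC (fun _ => 0) B a k := by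
      intro a
      exact (Finset.prod_congr rfl fun k _ => (stepC_zero_eq B a k).symm)
    have key : expUtil (fun _ => (1:ℝ)) B (u i) i - expUtil (fun _ => (1:ℝ)) B (u i) j
        = EV i j (fun _ => 0) (List.ofFn B) := by
      unfold expUtil
      rw [← Finset.sum_sub_distrib]
      rw [show (∑ a : Fin m → Option (Fin n),
          (outcomeProb (fun _ => (1:ℝ)) B a * realizedUtil (u i) a i
            - outcomeProb (fun _ => (1:ℝ)) B a * realizedUtil (u i) a j))
          = ∑ a : Fin m → Option (Fin n), (∏ k, stepC (fun _ => 0) B a k) * valF i j B a from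
        Finset.sum_congr rfl fun a _ => by rw [← mul_sub, hval a, hprob a]]
      exact bridge i j m B (fun _ => 0)
    have hEV := (EV_invariant i j hij (List.ofFn B)).1 (fun _ => 0)
    norm_num at hEV
    linarith [key, hEV]

end
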